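/- Domain adaptation bound: let ε_S(h) and ε_T(h) denote the expected error of hypothesis h under source distribution S and target distribution T respectively, and let λ = ε_S(h*) + ε_T(h*) where h* minimizes the combined error. Then for every h in hypothesis class H, ε_T(h) ≤ ε_S(h) + (1/2)·d_{HΔH}(S, T) + λ, where d_{HΔH}(S,T) = 2·sup_{A ∈ A_{HΔH}} |P_S(A) - P_T(A)| is the HΔH-divergence. -/
import Mathlib


open MeasureTheory

/-- Union-bound style triangle inequality for errors. -/
lemma tri_aux {X : Type*} [MeasurableSpace X] (D : Measure (X × Bool))
    [IsProbabilityMeasure D] (f g : X → Bool) :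
    (D {p : X × Bool | f p.1 ≠ p.2}).toReal ≤
      (D {p : X × Bool | g p.1 ≠ p.2}).toReal +
      (D {p : X × Bool | f p.1 ≠ g p.1}).toReal := by
  have hsub : {p : X × Bool | f p.1 ≠ p.2} ⊆
      {p : X × Bool | g p.1 ≠ p.2} ∪ {p : X × Bool | f p.1 ≠ g p.1} := by
    intro p hp
    by_cases hg : g p.1 = p.2
    · exact Or.inr (by simp [Set.mem_setOf_eq, hg]; exact fun hfg => hp (hg ▸ hfg))
    · exact Or.inl hg
  have h1 : D {p : X × Bool | f p.1 ≠ p.2} ≤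
      D {p : X × Bool | g p.1 ≠ p.2} + D {p : X × Bool | f p.1 ≠ g p.1} :=
    le_trans (measure_mono hsub) (measure_union_le _ _)
  have := ENNReal.toReal_mono
    (by finiteness : D {p : X × Bool | g p.1 ≠ p.2} + D {p : X × Bool | f p.1 ≠ g p.1} ≠ ⊤) h1
  rwa [ENNReal.toReal_add (measure_ne_top _ _) (measure_ne_top _ _)] at this

/-- Ben-David et al. domain adaptation bound:
ε_T(h) ≤ ε_S(h) + (1/2)·d_{HΔH}(S,T) + λ with λ = ε_S(h*) + ε_T(h*). -/
theorem stmt17 {X : Type*} [MeasurableSpace X]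
    (S T : Measure (X × Bool)) [IsProbabilityMeasure S] [IsProbabilityMeasure T]
    (H : Set (X → Bool)) (hHmeas : ∀ h ∈ H, Measurable h)
    (err : Measure (X × Bool) → (X → Bool) → ℝ)
    (herr : ∀ D h, err D h = (D {p : X × Bool | h p.1 ≠ p.2}).toReal)
    (dHH : ℝ)
    (hdHH : dHH = 2 * ⨆ q : H × H,
      |((S.map Prod.fst) {x : X | (q.1 : X → Bool) x ≠ (q.2 : X → Bool) x}).toReal -
        ((T.map Prod.fst) {x : X | (q.1 : X → Bool) x ≠ (q.2 : X → Bool) x}).toReal|)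
    (hstar : X → Bool) (hstarH : hstar ∈ H)
    (hmin : ∀ h ∈ H, err S hstar + err T hstar ≤ err S h + err T h) :
    ∀ h ∈ H, err T h ≤ err S h + dHH / 2 + (err S hstar + err T hstar) := by
  intro h hH
  have hhm := hHmeas h hH
  have hsm := hHmeas hstar hstarH
  haveI : IsProbabilityMeasure (S.map (Prod.fst : X × Bool → X)) :=
    Measure.isProbabilityMeasure_map measurable_fst.aemeasurable
  haveI : IsProbabilityMeasure (T.map (Prod.fst : X × Bool → X)) :=
    Measure.isProbabilityMeasure_map measurable_fst.aemeasurable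
  set A : Set X := {x : X | h x ≠ hstar x} with hAdef
  have hA : MeasurableSet A := (measurableSet_eq_fun hhm hsm).compl
  have hmapS : (S.map Prod.fst) A = S {p : X × Bool | h p.1 ≠ hstar p.1} := by
    rw [Measure.map_apply measurable_fst hA]; rfl
  have hmapT : (T.map Prod.fst) A = T {p : X × Bool | h p.1 ≠ hstar p.1} := by
    rw [Measure.map_apply measurable_fst hA]; rfl
  set a := ((S.map Prod.fst) A).toReal with ha
  set b := ((T.map Prod.fst) A).toReal with hb
  -- step 1: err T h ≤ err T hstar + b
  have step1 : err T h ≤ err T hstar + b := by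
    rw [herr, herr, hb, hmapT]
    exact tri_aux T h hstar
  -- step 2: b ≤ a + |a - b|
  have step2 : b ≤ a + |a - b| := by
    cases le_total a b with
    | inl hle => rw [abs_of_nonpos (by linarith)]; linarith
    | inr hle => rw [abs_of_nonneg (by linarith)]; linarith
  -- step 3: |a - b| ≤ dHH / 2
  have step3 : |a - b| ≤ dHH / 2 := by
    rw [hdHH]
    rw [mul_comm, mul_div_assoc]
    norm_num
    have hbdd : BddAbove (Set.range fun q : H × H =>
        |((S.map Prod.fst) {x : X | (q.1 : X → Bool) x ≠ (q.2 : X → Bool) x}).toReal -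
          ((T.map Prod.fst) {x : X | (q.1 : X → Bool) x ≠ (q.2 : X → Bool) x}).toReal|) := by
      refine ⟨1, ?_⟩
      rintro r ⟨q, rfl⟩
      have h1 : ((S.map Prod.fst) {x : X | (q.1 : X → Bool) x ≠ (q.2 : X → Bool) x}).toReal ≤ 1 := by
        have := prob_le_one (μ := S.map (Prod.fst : X × Bool → X))
          (s := {x : X | (q.1 : X → Bool) x ≠ (q.2 : X → Bool) x})
        simpa using ENNReal.toReal_mono ENNReal.one_ne_top this
      have h2 : ((T.map Prod.fst) {x : X | (q.1 : X → Bool) x ≠ (q.2 : X → Bool) x}).toReal ≤ 1 := by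
        have := prob_le_one (μ := T.map (Prod.fst : X × Bool → X))
          (s := {x : X | (q.1 : X → Bool) x ≠ (q.2 : X → Bool) x})
        simpa using ENNReal.toReal_mono ENNReal.one_ne_top this
      have h3 : 0 ≤ ((S.map Prod.fst) {x : X | (q.1 : X → Bool) x ≠ (q.2 : X → Bool) x}).toReal :=
        ENNReal.toReal_nonneg
      have h4 : 0 ≤ ((T.map Prod.fst) {x : X | (q.1 : X → Bool) x ≠ (q.2 : X → Bool) x}).toReal :=
        ENNReal.toReal_nonneg
      rw [abs_sub_le_iff]; constructor <;> linarith
    have := le_ciSup hbdd (⟨⟨h, hH⟩, ⟨hstar, hstarH⟩⟩ : H × H)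
    simpa [ha, hb, hAdef] using this
  -- step 4: a ≤ err S h + err S hstar
  have step4 : a ≤ err S h + err S hstar := by
    rw [herr, herr, ha, hmapS]
    have hsub : {p : X × Bool | h p.1 ≠ hstar p.1} ⊆
        {p : X × Bool | h p.1 ≠ p.2} ∪ {p : X × Bool | hstar p.1 ≠ p.2} := by
      intro p hp
      by_cases hh : h p.1 = p.2
      · exact Or.inr (fun hs => hp (hh.trans hs.symm))
      · exact Or.inl hh
    have h1 : S {p : X × Bool | h p.1 ≠ hstar p.1} ≤
        S {p : X × Bool | h p.1 ≠ p.2} + S {p : X × Bool | hstar p.1 ≠ p.2} :=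
      le_trans (measure_mono hsub) (measure_union_le _ _)
    have := ENNReal.toReal_mono (by finiteness) h1
    rwa [ENNReal.toReal_add (measure_ne_top _ _) (measure_ne_top _ _)] at this
  linarith
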